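/- Every ≤γ-semigroup S (γ infinite) embeds into a complete ordinal semigroup: adjoin a new element Ω to S, extend the product so that it is defined on every nonempty ordinal-indexed sequence, agrees with the original on sequences from S indexed by nonzero ordinals ≤ γ whose original product was defined via the unique <|γ|⁺-extension, equals Ω on every sequence containing Ω, and equals Ω on every sequence of elements of S indexed by an ordinal ≥ |γ|⁺; the resulting structure on S ∪ {Ω} satisfies (U) and (Ord) for all ordinal-indexed sequences. -/

import Mathlib

universe u

open Ordinal Cardinal

/-- `π : δ → η` is a surjective order-preserving map between the ordinals `δ` and `η`
whose fiber over each `j < η` is the (nonempty) interval `[β j, β j + ε j)`. -/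
def IsFiberDecomp (δ η : Ordinal.{u}) (π β ε : Ordinal.{u} → Ordinal.{u}) : Prop :=
  (∀ i < δ, π i < η) ∧
  (∀ i < δ, ∀ i' < δ, i ≤ i' → π i ≤ π i') ∧
  (∀ j < η, ∃ i < δ, π i = j) ∧
  (∀ j < η, ∀ i : Ordinal.{u}, (i < δ ∧ π i = j) ↔ (β j ≤ i ∧ i < β j + ε j))

/-- A partial ordinal semigroup: a partial product (`none` = undefined) on
ordinal-indexed sequences (a sequence indexed by `δ` is represented by a total function,
and the product only depends on the values at indices `< δ`), satisfying axiom (U)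
(singleton products) and axiom (Ord) (generalized associativity: whenever the product of
`(a i)_{i<δ}` is defined and `π : δ → η` is a surjective order-preserving map with
interval fibers `[β j, β j + ε j)`, all the fiber products and the `η`-indexed product of
the fiber products are defined, and the latter equals the product over `δ`). -/
structure PartialOrdinalSemigroup (S : Type u) : Type (u + 1) where
  prod : Ordinal.{u} → (Ordinal.{u} → S) → Option S
  congr : ∀ δ a b, (∀ i < δ, a i = b i) → prod δ a = prod δ b
  unary : ∀ a, prod 1 a = some (a 0)
  ord : ∀ δ η (a : Ordinal.{u} → S) (π β ε : Ordinal.{u} → Ordinal.{u}) (s : S),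
    IsFiberDecomp δ η π β ε → prod δ a = some s →
    ∃ b : Ordinal.{u} → S,
      (∀ j < η, prod (ε j) (fun γ => a (β j + γ)) = some (b j)) ∧
      prod η b = some s

/-- The product of `P` is defined exactly on sequences whose index ordinal satisfies `D`. -/
def DomExactly {S : Type u} (P : PartialOrdinalSemigroup S)
    (D : Ordinal.{u} → Prop) : Prop :=
  ∀ δ a, (P.prod δ a).isSome ↔ D δ

/-- `Q` extends `P`: every product defined in `P` is defined in `Q` with the same value. -/
def Extends {S : Type u} (Q P : PartialOrdinalSemigroup S) : Prop :=
  ∀ δ a s, P.prod δ a = some s → Q.prod δ a = some s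

namespace EmbedAux


variable {δ η : Ordinal.{u}} {π β ε : Ordinal.{u} → Ordinal.{u}}

theorem fd_eps_pos (hD : IsFiberDecomp δ η π β ε) {j} (hj : j < η) : 0 < ε j := by
  obtain ⟨i, hi, hπ⟩ := hD.2.2.1 j hj
  obtain ⟨hb, hlt⟩ := (hD.2.2.2 j hj i).mp ⟨hi, hπ⟩
  rcases eq_zero_or_pos (ε j) with h | h
  · rw [h, add_zero] at hlt
    exact absurd (hb.trans_lt hlt) (lt_irrefl _)
  · exact h

theorem fd_beta_mem (hD : IsFiberDecomp δ η π β ε) {j} (hj : j < η) :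
    β j < δ ∧ π (β j) = j :=
  (hD.2.2.2 j hj (β j)).mpr ⟨le_refl _, by
    have := fd_eps_pos hD hj
    have h2 : β j + 0 < β j + ε j := (add_lt_add_iff_left (β j)).mpr this
    rwa [add_zero] at h2⟩

theorem fd_sum_le (hD : IsFiberDecomp δ η π β ε) {j} (hj : j < η) : β j + ε j ≤ δ := by
  by_contra h
  push_neg at h
  have hβ := (fd_beta_mem hD hj).1
  have := (hD.2.2.2 j hj δ).mpr ⟨hβ.le, h⟩
  exact absurd this.1 (lt_irrefl δ)

theorem fd_beta_lt (hD : IsFiberDecomp δ η π β ε) {j j'} (hj' : j' < η) (h : j < j') :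
    β j < β j' := by
  have hj : j < η := h.trans hj'
  have h1 := fd_beta_mem hD hj
  have h2 := fd_beta_mem hD hj'
  by_contra hle
  push_neg at hle
  have h3 := hD.2.1 (β j') h2.1 (β j) h1.1 hle
  rw [h1.2, h2.2] at h3
  exact absurd h (not_lt_of_ge h3)

theorem fd_le_beta (hD : IsFiberDecomp δ η π β ε) : ∀ j < η, j ≤ β j := by
  intro j
  induction j using Ordinal.induction with
  | h j IH =>
    intro hj
    have key : ∀ j' < j, j' < β j := fun j' hj' =>
      lt_of_le_of_lt (IH j' hj' (hj'.trans hj)) (fd_beta_lt hD hj hj')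
    by_contra h
    push_neg at h
    exact absurd (key (β j) h) (lt_irrefl _)

theorem fd_eta_le (hD : IsFiberDecomp δ η π β ε) : η ≤ δ := by
  by_contra h
  push_neg at h
  exact absurd ((fd_le_beta hD δ h).trans_lt (fd_beta_mem hD h).1) (lt_irrefl δ)

theorem fd_eta_pos (hD : IsFiberDecomp δ η π β ε) (hδ : 0 < δ) : 0 < η :=
  (zero_le (a := _)).trans_lt (hD.1 0 hδ)

theorem fd_point (hD : IsFiberDecomp δ η π β ε) {i} (hi : i < δ) :
    π i < η ∧ i - β (π i) < ε (π i) ∧ β (π i) + (i - β (π i)) = i := by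
  have hπ : π i < η := hD.1 i hi
  obtain ⟨hb, hlt⟩ := (hD.2.2.2 (π i) hπ i).mp ⟨hi, rfl⟩
  refine ⟨hπ, ?_, Ordinal.add_sub_cancel_of_le hb⟩
  rwa [Ordinal.sub_lt_of_le hb]

theorem fd_eta_one (hD : IsFiberDecomp δ η π β ε) (hδ : 0 < δ) (hη : η = 1) :
    β 0 = 0 ∧ ε 0 = δ := by
  subst hη
  have h4 := hD.2.2.2 0 zero_lt_one
  have hπ0 : π 0 = 0 := Ordinal.lt_one_iff_zero.mp (hD.1 0 hδ)
  have hβ0 : β 0 = 0 := nonpos_iff_eq_zero.mp ((h4 0).mp ⟨hδ, hπ0⟩).1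
  refine ⟨hβ0, ?_⟩
  have h1 : ε 0 ≤ δ := by
    have := fd_sum_le hD zero_lt_one
    rwa [hβ0, zero_add] at this
  have h2 : δ ≤ ε 0 := by
    by_contra h
    push_neg at h
    have hπ : π (ε 0) = 0 := Ordinal.lt_one_iff_zero.mp (hD.1 (ε 0) h)
    have := ((h4 (ε 0)).mp ⟨h, hπ⟩).2
    rw [hβ0, zero_add] at this
    exact absurd this (lt_irrefl _)
  exact le_antisymm h1 h2



theorem decomp_succ (γ : Ordinal.{u}) (hγ : Ordinal.omega0 ≤ γ) (δ₀ : Ordinal.{u})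
    (hδγ : γ ≤ δ₀) :
    ∃ η π β ε, IsFiberDecomp (Order.succ δ₀) η π β ε ∧ 0 < η ∧ η < Order.succ δ₀ ∧
      ∀ j < η, ε j < Order.succ δ₀ := by
  have hδ₀pos : 0 < δ₀ := lt_of_lt_of_le omega0_pos (hγ.trans hδγ)
  have h2ω : (2 : Ordinal) ≤ omega0 := by
    exact_mod_cast (Ordinal.nat_lt_omega0 2).le
  have h02 : (0 : Ordinal) < 2 := by
    rw [← Ordinal.succ_one]
    exact lt_of_le_of_lt (zero_le (a := 1)) (Order.lt_succ 1)
  have h12 : (1 : Ordinal) < 2 := by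
    rw [← Ordinal.succ_one]; exact Order.lt_succ 1
  have hcase : ∀ j : Ordinal, j < 2 → j = 0 ∨ j = 1 := by
    intro j hj
    rw [← Ordinal.succ_one, Order.lt_succ_iff] at hj
    exact Ordinal.le_one_iff.mp hj
  refine ⟨2, fun i => if i < δ₀ then 0 else 1, fun j => if j = 0 then 0 else δ₀,
    fun j => if j = 0 then δ₀ else 1, ⟨?_, ?_, ?_, ?_⟩, h02, ?_, ?_⟩
  · intro i _
    dsimp only
    by_cases h : i < δ₀
    · rw [if_pos h]; exact h02
    · rw [if_neg h]; exact h12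
  · intro i _ i' _ hle
    dsimp only
    by_cases h : i' < δ₀
    · rw [if_pos (lt_of_le_of_lt hle h), if_pos h]
    · by_cases h' : i < δ₀
      · rw [if_pos h', if_neg h]; exact zero_le (a := 1)
      · rw [if_neg h', if_neg h]
  · intro j hj
    rcases hcase j hj with rfl | rfl
    · exact ⟨0, lt_of_lt_of_le hδ₀pos (Order.le_succ δ₀), by dsimp only; rw [if_pos hδ₀pos]⟩
    · exact ⟨δ₀, Order.lt_succ δ₀, by dsimp only; rw [if_neg (lt_irrefl δ₀)]⟩
  · intro j hj i
    rcases hcase j hj with rfl | rfl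
    · dsimp only
      rw [if_pos rfl, if_pos rfl, zero_add]
      constructor
      · rintro ⟨hi, hπ⟩
        by_cases h : i < δ₀
        · exact ⟨zero_le (a := i), h⟩
        · rw [if_neg h] at hπ; exact absurd hπ one_ne_zero
      · rintro ⟨-, h⟩
        exact ⟨lt_of_lt_of_le h (Order.le_succ δ₀), by rw [if_pos h]⟩
    · have h10 : ¬ (1 : Ordinal) = 0 := one_ne_zero
      dsimp only
      rw [if_neg h10, if_neg h10]
      constructor
      · rintro ⟨hi, hπ⟩
        by_cases h : i < δ₀
        · rw [if_pos h] at hπ; exact absurd hπ.symm one_ne_zero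
        · push_neg at h
          refine ⟨h, ?_⟩
          rw [Ordinal.add_one_eq_succ]
          exact hi
      · rintro ⟨h1, h2⟩
        rw [Ordinal.add_one_eq_succ, Order.lt_succ_iff] at h2
        have : i = δ₀ := le_antisymm h2 h1
        subst this
        exact ⟨Order.lt_succ i, by rw [if_neg (lt_irrefl i)]⟩
  · exact lt_of_le_of_lt h2ω (lt_of_le_of_lt (hγ.trans hδγ) (Order.lt_succ δ₀))
  · intro j hj
    rcases hcase j hj with rfl | rfl
    · dsimp only; rw [if_pos rfl]; exact Order.lt_succ δ₀
    · dsimp only; rw [if_neg (one_ne_zero : ¬ (1:Ordinal) = 0)]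
      exact lt_of_lt_of_le (lt_of_lt_of_le Ordinal.one_lt_omega0 (hγ.trans hδγ)) (Order.le_succ δ₀)



theorem decomp_limit (γ : Ordinal.{u}) (δ : Ordinal.{u})
    (hδγ : γ < δ) (hcard : δ.card ≤ γ.card) (hlim : Order.IsSuccLimit δ) :
    ∃ η π β ε, IsFiberDecomp δ η π β ε ∧ 0 < η ∧ η < δ ∧ ∀ j < η, ε j < δ := by
  classical
  obtain ⟨f, hf⟩ := Ordinal.exists_fundamental_sequence δ
  have haux : ∀ x : Ordinal.{u}, x < x + 1 := fun x => by
    rw [Ordinal.add_one_eq_succ]; exact Order.lt_succ x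
  let fe : Ordinal.{u} → Ordinal.{u} := fun j => if h : j < (Ordinal.cof δ).ord then f j h else 0
  have hfe : ∀ {j} (h : j < (Ordinal.cof δ).ord), fe j = f j h := fun {j} h => dif_pos h
  have hfeδ : ∀ j, j < (Ordinal.cof δ).ord → fe j < δ := fun j h => by
    rw [hfe h]; exact hf.lt h
  have hfemono : ∀ {j j'}, j < j' → j' < (Ordinal.cof δ).ord → fe j < fe j' := by
    intro j j' h h'
    rw [hfe (h.trans h'), hfe h']
    exact hf.2.1 _ _ h
  have hfeunb : ∀ i, i < δ → ∃ j, j < (Ordinal.cof δ).ord ∧ i ≤ fe j := by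
    intro i hi
    have h2 : i < Ordinal.blsub.{u,u} (Ordinal.cof δ).ord f := by rw [hf.2.2]; exact hi
    obtain ⟨j, hj, hle⟩ := Ordinal.lt_blsub_iff.mp h2
    exact ⟨j, hj, by rw [hfe hj]; exact hle⟩
  refine ⟨(Ordinal.cof δ).ord,
    fun i => sInf {j | j < (Ordinal.cof δ).ord ∧ i ≤ fe j},
    fun j => Ordinal.blsub.{u,u} j (fun j' _ => fe j'),
    fun j => (fe j + 1) - Ordinal.blsub.{u,u} j (fun j' _ => fe j'), ?_, ?_, ?_, ?_⟩
  rotate_left 1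
  · -- 0 < η
    have h1 : Cardinal.aleph0 ≤ Ordinal.cof δ := Ordinal.aleph0_le_cof.mpr hlim
    have h2 : Ordinal.omega0 ≤ (Ordinal.cof δ).ord := by
      rw [← Cardinal.ord_aleph0]
      exact Cardinal.ord_le_ord.mpr h1
    exact lt_of_lt_of_le Ordinal.omega0_pos h2
  · -- η < δ
    have h1 : (Ordinal.cof δ).ord ≤ δ.card.ord := Cardinal.ord_le_ord.mpr (Ordinal.cof_le_card δ)
    have h2 : δ.card.ord ≤ γ.card.ord := Cardinal.ord_le_ord.mpr hcard
    exact lt_of_le_of_lt (h1.trans (h2.trans (Cardinal.ord_card_le γ))) hδγ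
  · -- ε j < δ
    intro j hj
    dsimp only
    have h1 : (fe j + 1) - Ordinal.blsub.{u,u} j (fun j' _ => fe j') ≤ fe j + 1 :=
      Ordinal.sub_le_self _ _
    have h2 : fe j + 1 < δ := by
      rw [Ordinal.add_one_eq_succ]
      exact hlim.succ_lt (hfeδ j hj)
    exact lt_of_le_of_lt h1 h2
  -- the decomposition itself
  have hβle : ∀ j, j < (Ordinal.cof δ).ord →
      Ordinal.blsub.{u,u} j (fun j' _ => fe j') ≤ fe j := fun j hj =>
    Ordinal.blsub_le fun j' h' => hfemono h' hj
  have hβε : ∀ j, j < (Ordinal.cof δ).ord →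
      Ordinal.blsub.{u,u} j (fun j' _ => fe j') +
        ((fe j + 1) - Ordinal.blsub.{u,u} j (fun j' _ => fe j')) = fe j + 1 := fun j hj =>
    Ordinal.add_sub_cancel_of_le ((hβle j hj).trans (haux _).le)
  have hmem : ∀ {i}, i < δ →
      (sInf {j | j < (Ordinal.cof δ).ord ∧ i ≤ fe j} < (Ordinal.cof δ).ord ∧
        i ≤ fe (sInf {j | j < (Ordinal.cof δ).ord ∧ i ≤ fe j})) := by
    intro i hi
    have hne : {j | j < (Ordinal.cof δ).ord ∧ i ≤ fe j}.Nonempty := by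
      obtain ⟨j, hj, h⟩ := hfeunb i hi
      exact ⟨j, hj, h⟩
    exact csInf_mem hne
  have hc4 : ∀ j < (Ordinal.cof δ).ord, ∀ i : Ordinal.{u},
      (i < δ ∧ sInf {j | j < (Ordinal.cof δ).ord ∧ i ≤ fe j} = j) ↔
      (Ordinal.blsub.{u,u} j (fun j' _ => fe j') ≤ i ∧
        i < Ordinal.blsub.{u,u} j (fun j' _ => fe j') +
          ((fe j + 1) - Ordinal.blsub.{u,u} j (fun j' _ => fe j'))) := by
    intro j hj i
    rw [hβε j hj]
    constructor
    · rintro ⟨hi, rfl⟩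
      obtain ⟨hπη, hπle⟩ := hmem hi
      refine ⟨Ordinal.blsub_le ?_, hπle.trans_lt (haux _)⟩
      intro j' hj'
      by_contra hcon
      push_neg at hcon
      have h5 : sInf {j | j < (Ordinal.cof δ).ord ∧ i ≤ fe j} ≤ j' :=
        csInf_le' ⟨hj'.trans hπη, hcon⟩
      exact absurd hj' (not_lt_of_ge h5)
    · rintro ⟨hβi, hilt⟩
      have hife : i ≤ fe j := by
        rw [Ordinal.add_one_eq_succ, Order.lt_succ_iff] at hilt
        exact hilt
      have hiδ : i < δ := hife.trans_lt (hfeδ j hj)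
      refine ⟨hiδ, ?_⟩
      have h1 : sInf {j | j < (Ordinal.cof δ).ord ∧ i ≤ fe j} ≤ j := csInf_le' ⟨hj, hife⟩
      rcases lt_or_eq_of_le h1 with h2 | h2
      · exfalso
        have h6 := (hmem hiδ).2
        have h3 : fe (sInf {j | j < (Ordinal.cof δ).ord ∧ i ≤ fe j}) <
            Ordinal.blsub.{u,u} j (fun j' _ => fe j') :=
          Ordinal.lt_blsub (fun j' _ => fe j') _ h2
        exact absurd (h6.trans_lt h3) (not_lt_of_ge hβi)
      · exact h2
  refine ⟨?_, ?_, ?_, hc4⟩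
  · intro i hi
    exact (hmem hi).1
  · intro i hi i' hi' hle
    have hne : {j | j < (Ordinal.cof δ).ord ∧ i' ≤ fe j}.Nonempty := by
      obtain ⟨j, hj, h⟩ := hfeunb i' hi'
      exact ⟨j, hj, h⟩
    apply csInf_le_csInf (OrderBot.bddBelow _) hne
    intro j hjmem
    exact ⟨hjmem.1, hle.trans hjmem.2⟩
  · intro j hj
    refine ⟨fe j, hfeδ j hj, ?_⟩
    have := (hc4 j hj (fe j)).mpr ⟨hβle j hj, by rw [hβε j hj]; exact haux _⟩
    exact this.2


theorem decomp_exists (γ : Ordinal.{u}) (hγ : Ordinal.omega0 ≤ γ) (δ : Ordinal.{u})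
    (hδγ : γ < δ) (hcard : δ.card ≤ γ.card) :
    ∃ η π β ε, IsFiberDecomp δ η π β ε ∧ 0 < η ∧ η < δ ∧ ∀ j < η, ε j < δ := by
  rcases Ordinal.zero_or_succ_or_isSuccLimit δ with h | ⟨δ₀, rfl⟩ | hlim
  · exact absurd (h ▸ hδγ) (not_lt_of_ge (zero_le (a := γ)))
  · exact decomp_succ γ hγ δ₀ (Order.lt_succ_iff.mp hδγ)
  · exact decomp_limit γ δ hδγ hcard hlim


theorem card_bound (γ : Ordinal.{u}) (hγ : Ordinal.omega0 ≤ γ)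
    (hD : IsFiberDecomp δ η π β ε)
    (hη : η < (Order.succ γ.card).ord) (hε : ∀ j < η, ε j < (Order.succ γ.card).ord) :
    δ < (Order.succ γ.card).ord := by
  have hηc : η.card ≤ γ.card := Order.lt_succ_iff.mp (Cardinal.lt_ord.mp hη)
  have hεc : ∀ j, j < η → (ε j).card ≤ γ.card := fun j hj =>
    Order.lt_succ_iff.mp (Cardinal.lt_ord.mp (hε j hj))
  rw [Cardinal.lt_ord, Order.lt_succ_iff]
  have hinj : Function.Injective
      (fun i : Set.Iio δ => (⟨⟨π i.1, hD.1 i.1 i.2⟩,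
        ⟨i.1 - β (π i.1), (fd_point hD i.2).2.1⟩⟩ :
        Σ j : Set.Iio η, Set.Iio (ε j.1))) := by
    intro i i' h
    have h1 : π i.1 = π i'.1 := congrArg (fun p => p.1.1) h
    have h2 : i.1 - β (π i.1) = i'.1 - β (π i'.1) := congrArg (fun p => p.2.1) h
    apply Subtype.ext
    rw [h1] at h2
    rw [← (fd_point hD i.2).2.2, ← (fd_point hD i'.2).2.2, h1, h2]
  have hmk := Cardinal.mk_le_of_injective hinj
  rw [Cardinal.mk_sigma, Ordinal.mk_Iio_ordinal] at hmk
  have hsum : (Cardinal.sum fun j : Set.Iio η => #(Set.Iio (ε j.1))) ≤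
      Cardinal.sum fun _ : Set.Iio η => Cardinal.lift.{u+1} γ.card := by
    apply Cardinal.sum_le_sum
    intro j
    rw [Ordinal.mk_Iio_ordinal]
    exact Cardinal.lift_le.mpr (hεc j.1 j.2)
  rw [Cardinal.sum_const', Ordinal.mk_Iio_ordinal, ← Cardinal.lift_mul] at hsum
  have h5 : Cardinal.lift.{u+1} δ.card ≤ Cardinal.lift.{u+1} (η.card * γ.card) :=
    hmk.trans hsum
  have h3 : δ.card ≤ η.card * γ.card := Cardinal.lift_le.mp h5
  have h4 : η.card * γ.card ≤ γ.card := by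
    calc η.card * γ.card ≤ γ.card * γ.card := mul_le_mul' hηc le_rfl
      _ = γ.card := Cardinal.mul_eq_self (Ordinal.aleph0_le_card.mpr hγ)
  exact h3.trans h4

theorem fd_big (γ : Ordinal.{u}) (hγ : Ordinal.omega0 ≤ γ)
    (hD : IsFiberDecomp δ η π β ε) (hκδ : (Order.succ γ.card).ord ≤ δ) :
    (Order.succ γ.card).ord ≤ η ∨ ∃ j, j < η ∧ (Order.succ γ.card).ord ≤ ε j := by
  by_contra h
  push_neg at h
  exact absurd (card_bound γ hγ hD h.1 fun j hj => h.2 j hj) (not_lt_of_ge hκδ)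

-- === uniqueness of the extension ===
theorem uniq {S : Type u} (γ : Ordinal.{u}) (hγ : Ordinal.omega0 ≤ γ)
    (P : PartialOrdinalSemigroup S) (hP : DomExactly P (fun δ => 0 < δ ∧ δ ≤ γ))
    (P1 P2 : PartialOrdinalSemigroup S)
    (hd1 : DomExactly P1 (fun δ => 0 < δ ∧ δ.card ≤ γ.card)) (he1 : Extends P1 P)
    (hd2 : DomExactly P2 (fun δ => 0 < δ ∧ δ.card ≤ γ.card)) (he2 : Extends P2 P)
    (δ : Ordinal.{u}) : 0 < δ → δ.card ≤ γ.card →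
      ∀ a : Ordinal.{u} → S, P1.prod δ a = P2.prod δ a := by
  induction δ using Ordinal.induction with
  | h δ IH =>
  intro hpos hcard a
  rcases le_or_gt δ γ with hle | hlt
  · have h := (hP δ a).mpr ⟨hpos, hle⟩
    obtain ⟨s, hs⟩ := Option.isSome_iff_exists.mp h
    rw [he1 δ a s hs, he2 δ a s hs]
  · obtain ⟨η, π, β, ε, hD, hη, hηδ, hε⟩ := decomp_exists γ hγ δ hlt hcard
    obtain ⟨s1, hs1⟩ := Option.isSome_iff_exists.mp ((hd1 δ a).mpr ⟨hpos, hcard⟩)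
    obtain ⟨s2, hs2⟩ := Option.isSome_iff_exists.mp ((hd2 δ a).mpr ⟨hpos, hcard⟩)
    obtain ⟨b1, hb1, ht1⟩ := P1.ord δ η a π β ε s1 hD hs1
    obtain ⟨b2, hb2, ht2⟩ := P2.ord δ η a π β ε s2 hD hs2
    have hbb : ∀ j < η, b1 j = b2 j := by
      intro j hj
      have hεp := fd_eps_pos hD hj
      have hεle : ε j ≤ δ := le_of_lt (hε j hj)
      have h7 := IH (ε j) (hε j hj) hεp ((Ordinal.card_le_card hεle).trans hcard)
        (fun t => a (β j + t))
      rw [hb1 j hj, hb2 j hj] at h7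
      exact Option.some.inj h7
    have h1 : P1.prod η b1 = P2.prod η b1 :=
      IH η hηδ hη ((Ordinal.card_le_card hηδ.le).trans hcard) b1
    have h2 : P2.prod η b1 = P2.prod η b2 := P2.congr η b1 b2 hbb
    rw [hs1, hs2, ← ht1, ← ht2, h1, h2]

-- === the trivial structure (used when no extension exists) ===

noncomputable def QnegP (S : Type u) : Ordinal.{u} → (Ordinal.{u} → Option S) → Option (Option S) :=
  fun δ a => if δ = 0 then none else if δ = 1 then some (a 0) else some none

theorem QnegP_congr (S : Type u) : ∀ δ a b, (∀ i < δ, a i = b i) →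
    QnegP S δ a = QnegP S δ b := by
  intro δ a b h
  unfold QnegP
  by_cases h0 : δ = 0
  · rw [if_pos h0, if_pos h0]
  by_cases h1 : δ = 1
  · rw [if_neg h0, if_neg h0, if_pos h1, if_pos h1,
      h 0 (pos_iff_ne_zero.mpr h0)]
  · rw [if_neg h0, if_neg h0, if_neg h1, if_neg h1]

theorem QnegP_unary (S : Type u) : ∀ a, QnegP S 1 a = some (a 0) := by
  intro a
  unfold QnegP
  rw [if_neg (one_ne_zero : ¬ (1:Ordinal) = 0), if_pos rfl]

theorem QnegP_ord (S : Type u) :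
    ∀ δ η (a : Ordinal.{u} → Option S) (π β ε : Ordinal.{u} → Ordinal.{u}) (s : Option S),
    IsFiberDecomp δ η π β ε → QnegP S δ a = some s →
    ∃ b : Ordinal.{u} → Option S,
      (∀ j < η, QnegP S (ε j) (fun t => a (β j + t)) = some (b j)) ∧
      QnegP S η b = some s := by
  intro δ η a π β ε s hD hp
  by_cases h0 : δ = 0
  · rw [h0] at hp
    unfold QnegP at hp
    rw [if_pos rfl] at hp
    exact absurd hp (by simp)
  have hδ : 0 < δ := pos_iff_ne_zero.mpr h0
  have hη0 : 0 < η := fd_eta_pos hD hδ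
  refine ⟨fun j => if ε j = 1 then a (β j) else none, fun j hj => ?_, ?_⟩
  · have hεp := fd_eps_pos hD hj
    beta_reduce
    by_cases he : ε j = 1
    · rw [if_pos he]
      show QnegP S (ε j) _ = some (a (β j))
      rw [he]
      unfold QnegP
      rw [if_neg (one_ne_zero : ¬ (1:Ordinal) = 0), if_pos rfl]
      simp
    · rw [if_neg he]
      show QnegP S (ε j) _ = some none
      unfold QnegP
      rw [if_neg hεp.ne', if_neg he]
  · by_cases h1 : δ = 1
    · have hs : s = a 0 := by
        rw [h1] at hp
        unfold QnegP at hp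
        rw [if_neg (one_ne_zero : ¬ (1:Ordinal) = 0), if_pos rfl] at hp
        exact (Option.some.inj hp).symm
      have hη1 : η = 1 := le_antisymm (h1 ▸ fd_eta_le hD) (Order.one_le_iff_pos.mpr hη0)
      obtain ⟨hβ0, hε0⟩ := fd_eta_one hD hδ hη1
      unfold QnegP
      rw [hη1, if_neg (one_ne_zero : ¬ (1:Ordinal) = 0), if_pos rfl]
      beta_reduce
      rw [if_pos (by rw [hε0, h1] : ε 0 = 1), hβ0, hs]
    · have hs : s = none := by
        unfold QnegP at hp
        rw [if_neg h0, if_neg h1] at hp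
        exact (Option.some.inj hp).symm
      by_cases hη1 : η = 1
      · obtain ⟨hβ0, hε0⟩ := fd_eta_one hD hδ hη1
        unfold QnegP
        rw [hη1, if_neg (one_ne_zero : ¬ (1:Ordinal) = 0), if_pos rfl]
        beta_reduce
        rw [if_neg (by rw [hε0]; exact h1 : ¬ ε 0 = 1), hs]
      · unfold QnegP
        rw [if_neg hη0.ne', if_neg hη1, hs]

noncomputable def Qneg (S : Type u) : PartialOrdinalSemigroup (Option S) where
  prod := QnegP S
  congr := QnegP_congr S
  unary := QnegP_unary S
  ord := QnegP_ord S

-- === the main structure (built from a chosen extension P0) ===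

open scoped Classical in
noncomputable def QposP {S : Type u} (κ : Ordinal.{u}) (P0 : PartialOrdinalSemigroup S) :
    Ordinal.{u} → (Ordinal.{u} → Option S) → Option (Option S) := fun δ a =>
  if δ = 0 then none
  else if (∃ i < δ, a i = none) ∨ κ ≤ δ then some none
  else if h : (a 0).isSome then
    Option.map some (P0.prod δ (fun i => (a i).getD ((a 0).get h)))
  else none

section Qpos

variable {S : Type u} {κ : Ordinal.{u}} {P0 : PartialOrdinalSemigroup S}

theorem QposP_zero (a : Ordinal.{u} → Option S) : QposP κ P0 0 a = none := by
  unfold QposP; rw [if_pos rfl]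

theorem QposP_omega {δ : Ordinal.{u}} {a} (h0 : δ ≠ 0)
    (h : (∃ i < δ, a i = none) ∨ κ ≤ δ) : QposP κ P0 δ a = some none := by
  unfold QposP; rw [if_neg h0, if_pos h]

theorem QposP_good {δ : Ordinal.{u}} {a} (h0 : δ ≠ 0)
    (h : ¬((∃ i < δ, a i = none) ∨ κ ≤ δ)) :
    ∃ hs : (a 0).isSome,
      QposP κ P0 δ a = Option.map some (P0.prod δ (fun i => (a i).getD ((a 0).get hs))) := by
  have hδ : 0 < δ := pos_iff_ne_zero.mpr h0
  have h' := h
  push_neg at h'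
  have hs : (a 0).isSome := by
    rcases ha : a 0 with _ | x
    · exact absurd ha (h'.1 0 hδ)
    · rfl
  refine ⟨hs, ?_⟩
  unfold QposP
  rw [if_neg h0, if_neg h, dif_pos hs]

theorem QposP_dom (γ : Ordinal.{u}) (hγ : Ordinal.omega0 ≤ γ)
    (hdom : DomExactly P0 (fun δ => 0 < δ ∧ δ.card ≤ γ.card)) :
    ∀ δ a, ((QposP ((Order.succ γ.card).ord) P0 δ a).isSome) ↔ 0 < δ := by
  intro δ a
  constructor
  · intro h
    by_contra hδ
    rw [pos_iff_ne_zero, not_not] at hδ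
    rw [hδ, QposP_zero] at h
    exact absurd h (by simp)
  · intro hδ
    by_cases hc : (∃ i < δ, a i = none) ∨ (Order.succ γ.card).ord ≤ δ
    · rw [QposP_omega hδ.ne' hc]; rfl
    · obtain ⟨hs, he⟩ := QposP_good hδ.ne' hc
      rw [he]
      have h' := hc
      push_neg at h'
      have hcard : δ.card ≤ γ.card := Order.lt_succ_iff.mp (Cardinal.lt_ord.mp h'.2)
      have h2 := (hdom δ (fun i => (a i).getD ((a 0).get hs))).mpr ⟨hδ, hcard⟩
      simpa using h2

theorem QposP_congr (κ : Ordinal.{u}) (P0 : PartialOrdinalSemigroup S) :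
    ∀ δ a b, (∀ i < δ, a i = b i) → QposP κ P0 δ a = QposP κ P0 δ b := by
  intro δ a b h
  by_cases h0 : δ = 0
  · rw [h0, QposP_zero, QposP_zero]
  have hδ : 0 < δ := pos_iff_ne_zero.mpr h0
  have hcond : ((∃ i < δ, a i = none) ∨ κ ≤ δ) ↔ ((∃ i < δ, b i = none) ∨ κ ≤ δ) := by
    constructor
    · rintro (⟨i, hi, hai⟩ | hk)
      · exact Or.inl ⟨i, hi, by rw [← h i hi]; exact hai⟩
      · exact Or.inr hk
    · rintro (⟨i, hi, hbi⟩ | hk)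
      · exact Or.inl ⟨i, hi, by rw [h i hi]; exact hbi⟩
      · exact Or.inr hk
  by_cases hc : (∃ i < δ, a i = none) ∨ κ ≤ δ
  · rw [QposP_omega h0 hc, QposP_omega h0 (hcond.mp hc)]
  · have hc' : ¬((∃ i < δ, b i = none) ∨ κ ≤ δ) := fun hb => hc (hcond.mpr hb)
    obtain ⟨hsa, hea⟩ := QposP_good h0 hc
    obtain ⟨hsb, heb⟩ := QposP_good h0 hc'
    rw [hea, heb]
    congr 1
    apply P0.congr
    intro i hi
    obtain ⟨x, hx⟩ := Option.isSome_iff_exists.mp hsa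
    have hbx : b 0 = some x := (h 0 hδ) ▸ hx
    simp [h i hi, hx, hbx]

theorem QposP_unary (hκ : 1 < κ) (P0 : PartialOrdinalSemigroup S) :
    ∀ a, QposP κ P0 1 a = some (a 0) := by
  intro a
  have h0 : (1:Ordinal) ≠ 0 := one_ne_zero
  rcases ha : a 0 with _ | x
  · rw [QposP_omega h0 (Or.inl ⟨0, zero_lt_one, ha⟩)]
  · have hc : ¬((∃ i < (1:Ordinal), a i = none) ∨ κ ≤ 1) := by
      rintro (⟨i, hi, hai⟩ | hk)
      · rw [Ordinal.lt_one_iff_zero.mp hi, ha] at hai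
        exact absurd hai (by simp)
      · exact absurd hk (not_le_of_gt hκ)
    obtain ⟨hs, he⟩ := QposP_good h0 hc
    rw [he, P0.unary]
    simp [ha]

theorem QposP_ord (γ : Ordinal.{u}) (hγ : Ordinal.omega0 ≤ γ)
    (P0 : PartialOrdinalSemigroup S)
    (hdom : DomExactly P0 (fun δ => 0 < δ ∧ δ.card ≤ γ.card)) :
    ∀ δ η (a : Ordinal.{u} → Option S) (π β ε : Ordinal.{u} → Ordinal.{u}) (s : Option S),
    IsFiberDecomp δ η π β ε → QposP ((Order.succ γ.card).ord) P0 δ a = some s →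
    ∃ b : Ordinal.{u} → Option S,
      (∀ j < η, QposP ((Order.succ γ.card).ord) P0 (ε j) (fun t => a (β j + t)) = some (b j)) ∧
      QposP ((Order.succ γ.card).ord) P0 η b = some s := by
  intro δ η a π β ε s hD hp
  by_cases h0 : δ = 0
  · rw [h0, QposP_zero] at hp
    exact absurd hp (by simp)
  have hδ : 0 < δ := pos_iff_ne_zero.mpr h0
  have hη0 : 0 < η := fd_eta_pos hD hδ
  have hηδ : η ≤ δ := fd_eta_le hD
  have hQsome : ∀ (δ' : Ordinal.{u}) (a' : Ordinal.{u} → Option S), δ' ≠ 0 →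
      ∃ t, QposP ((Order.succ γ.card).ord) P0 δ' a' = some t := by
    intro δ' a' h'
    exact Option.isSome_iff_exists.mp
      ((QposP_dom γ hγ hdom δ' a').mpr (pos_iff_ne_zero.mpr h'))
  refine ⟨fun j => (QposP ((Order.succ γ.card).ord) P0 (ε j) (fun t => a (β j + t))).join,
    fun j hj => ?_, ?_⟩
  · obtain ⟨t, ht⟩ := hQsome (ε j) (fun t => a (β j + t)) (fd_eps_pos hD hj).ne'
    beta_reduce
    rw [ht]
    simp [Option.join]
  · by_cases hA : ∃ i < δ, a i = none
    · have hsA : s = none := by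
        rw [QposP_omega h0 (Or.inl hA)] at hp
        exact (Option.some.inj hp).symm
      obtain ⟨i0, hi0, hai0⟩ := hA
      obtain ⟨hπη, hsub, hadd⟩ := fd_point hD hi0
      have hbj : (QposP ((Order.succ γ.card).ord) P0 (ε (π i0))
          (fun t => a (β (π i0) + t))).join = none := by
        rw [QposP_omega (fd_eps_pos hD hπη).ne'
          (Or.inl ⟨i0 - β (π i0), hsub, by rw [hadd]; exact hai0⟩)]
        rfl
      rw [hsA]
      exact QposP_omega hη0.ne' (Or.inl ⟨π i0, hπη, hbj⟩)
    · by_cases hB : (Order.succ γ.card).ord ≤ δ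
      · have hsB : s = none := by
          rw [QposP_omega h0 (Or.inr hB)] at hp
          exact (Option.some.inj hp).symm
        rcases fd_big γ hγ hD hB with hbig | ⟨j1, hj1, hbig⟩
        · rw [hsB]
          exact QposP_omega hη0.ne' (Or.inr hbig)
        · have hbj : (QposP ((Order.succ γ.card).ord) P0 (ε j1)
              (fun t => a (β j1 + t))).join = none := by
            rw [QposP_omega (fd_eps_pos hD hj1).ne' (Or.inr hbig)]
            rfl
          rw [hsB]
          exact QposP_omega hη0.ne' (Or.inl ⟨j1, hj1, hbj⟩)
      · have hc : ¬((∃ i < δ, a i = none) ∨ (Order.succ γ.card).ord ≤ δ) := by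
          rintro (h | h)
          exacts [hA h, hB h]
        obtain ⟨hs0, he⟩ := QposP_good h0 hc
        have hva : ∀ i, i < δ → a i = some ((a i).getD ((a 0).get hs0)) := by
          intro i hi
          rcases ha : a i with _ | x
          · exact absurd ⟨i, hi, ha⟩ hA
          · rfl
        have hδκ : δ < (Order.succ γ.card).ord := not_le.mp hB
        have hcards : δ.card ≤ γ.card := Order.lt_succ_iff.mp (Cardinal.lt_ord.mp hδκ)
        obtain ⟨s0, hs0'⟩ := Option.isSome_iff_exists.mp
          ((hdom δ (fun i => (a i).getD ((a 0).get hs0))).mpr ⟨hδ, hcards⟩)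
        have hs : s = some s0 := by
          rw [he, hs0'] at hp
          exact (Option.some.inj hp).symm
        obtain ⟨b0, hb0, ht0⟩ := P0.ord δ η (fun i => (a i).getD ((a 0).get hs0)) π β ε s0 hD hs0'
        have hkey : ∀ j, j < η → (QposP ((Order.succ γ.card).ord) P0 (ε j)
            (fun t => a (β j + t))).join = some (b0 j) := by
          intro j hj
          have hεp := fd_eps_pos hD hj
          have hεle : ε j ≤ δ := le_trans (le_add_self) (fd_sum_le hD hj)
          have hblt : ∀ t, t < ε j → β j + t < δ := fun t ht =>
            lt_of_lt_of_le ((add_lt_add_iff_left (β j)).mpr ht) (fd_sum_le hD hj)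
          have hcj : ¬((∃ t < ε j, a (β j + t) = none) ∨ (Order.succ γ.card).ord ≤ ε j) := by
            rintro (⟨t, ht, hat⟩ | hbig)
            · exact hA ⟨β j + t, hblt t ht, hat⟩
            · exact absurd (hεle.trans_lt hδκ) (not_lt_of_ge hbig)
          obtain ⟨hsj, hej⟩ := QposP_good hεp.ne' hcj
          rw [hej]
          have hcg : P0.prod (ε j)
              (fun t => (a (β j + t)).getD ((a (β j + 0)).get hsj)) =
              P0.prod (ε j) (fun t => (a (β j + t)).getD ((a 0).get hs0)) := by
            apply P0.congr
            intro t ht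
            rcases ha : a (β j + t) with _ | x
            · exact absurd ⟨β j + t, hblt t ht, ha⟩ hA
            · simp [ha]
          rw [hcg, hb0 j hj]
          rfl
        have hcη : ¬((∃ j < η, (QposP ((Order.succ γ.card).ord) P0 (ε j)
            (fun t => a (β j + t))).join = none) ∨ (Order.succ γ.card).ord ≤ η) := by
          rintro (⟨j, hj, hjn⟩ | hbig)
          · rw [hkey j hj] at hjn
            exact absurd hjn (by simp)
          · exact absurd (hηδ.trans_lt hδκ) (not_lt_of_ge hbig)
        obtain ⟨hsη, heη⟩ := QposP_good hη0.ne' hcη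
        rw [heη]
        have hcg2 : P0.prod η (fun j => ((QposP ((Order.succ γ.card).ord) P0 (ε j)
              (fun t => a (β j + t))).join).getD
              (((QposP ((Order.succ γ.card).ord) P0 (ε 0)
              (fun t => a (β 0 + t))).join).get hsη)) = P0.prod η b0 := by
          apply P0.congr
          intro j hj
          rw [hkey j hj]
          rfl
        rw [hcg2, ht0, hs]
        rfl

end Qpos

end EmbedAux

/-- Every `≤γ`-semigroup (`γ` infinite) embeds into a complete ordinal semigroup obtained
by adjoining a fully absorbing element `Ω` (here `Ω = (none : Option S)`): there is a
partial ordinal semigroup structure `Q` on `Option S` whose products are defined on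
exactly the nonempty ordinal-indexed sequences, which agrees (via `some`) with the unique
`<|γ|⁺`-extension of the original product, takes the value `Ω` on every sequence
containing `Ω`, and takes the value `Ω` on every sequence of elements of `S` indexed by
an ordinal `≥ |γ|⁺`. -/
theorem embeds_in_complete_ordinal_semigroup {S : Type u} (γ : Ordinal.{u})
    (hγ : Ordinal.omega0 ≤ γ) (P : PartialOrdinalSemigroup S)
    (hP : DomExactly P (fun δ => 0 < δ ∧ δ ≤ γ)) :
    ∃ Q : PartialOrdinalSemigroup (Option S),
      DomExactly Q (fun δ => 0 < δ) ∧
      (∀ P' : PartialOrdinalSemigroup S,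
        DomExactly P' (fun δ => 0 < δ ∧ δ.card ≤ γ.card) → Extends P' P →
        ∀ δ (a : Ordinal.{u} → S) (s : S), P'.prod δ a = some s →
          Q.prod δ (fun i => some (a i)) = some (some s)) ∧
      (∀ δ (a : Ordinal.{u} → Option S), 0 < δ → (∃ i < δ, a i = none) →
        Q.prod δ a = some none) ∧
      (∀ δ (a : Ordinal.{u} → Option S), (Order.succ γ.card).ord ≤ δ →
        (∀ i < δ, (a i).isSome) → Q.prod δ a = some none) := by
  classical
  have hωκ : Ordinal.omega0 ≤ (Order.succ γ.card).ord := by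
    rw [← Cardinal.ord_aleph0]
    exact Cardinal.ord_le_ord.mpr ((Ordinal.aleph0_le_card.mpr hγ).trans (Order.le_succ _))
  by_cases hex : ∃ P' : PartialOrdinalSemigroup S,
      DomExactly P' (fun δ => 0 < δ ∧ δ.card ≤ γ.card) ∧ Extends P' P
  · obtain ⟨P0, hdom0, hext0⟩ := hex
    have hκ1 : (1:Ordinal) < (Order.succ γ.card).ord :=
      lt_of_lt_of_le Ordinal.one_lt_omega0 hωκ
    refine ⟨⟨EmbedAux.QposP ((Order.succ γ.card).ord) P0, EmbedAux.QposP_congr _ P0,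
      EmbedAux.QposP_unary hκ1 P0, EmbedAux.QposP_ord γ hγ P0 hdom0⟩, ?_, ?_, ?_, ?_⟩
    · intro δ a
      exact EmbedAux.QposP_dom γ hγ hdom0 δ a
    · intro P' hdom' hext' δ a s hs
      have hsome : (P'.prod δ a).isSome := by rw [hs]; rfl
      obtain ⟨hpos, hcard⟩ := (hdom' δ a).mp hsome
      have huq := EmbedAux.uniq γ hγ P hP P' P0 hdom' hext' hdom0 hext0 δ hpos hcard a
      have hs0 : P0.prod δ a = some s := by rw [← huq]; exact hs
      have hc : ¬((∃ i < δ, (fun i => some (a i)) i = none) ∨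
          (Order.succ γ.card).ord ≤ δ) := by
        rintro (⟨i, hi, h⟩ | h)
        · exact absurd h (by simp)
        · exact absurd (Cardinal.lt_ord.mpr (Order.lt_succ_iff.mpr hcard)) (not_lt_of_ge h)
      obtain ⟨hsm, he⟩ := EmbedAux.QposP_good hpos.ne' hc
      show EmbedAux.QposP _ P0 δ (fun i => some (a i)) = some (some s)
      rw [he]
      beta_reduce
      rw [show (P0.prod δ fun i => (some (a i)).getD ((some (a 0)).get hsm)) =
          P0.prod δ a from P0.congr δ _ a (fun i _ => rfl), hs0]
      rfl
    · intro δ a hpos hnone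
      exact EmbedAux.QposP_omega hpos.ne' (Or.inl hnone)
    · intro δ a hκδ _
      have h0 : δ ≠ 0 := by
        intro h
        rw [h] at hκδ
        exact absurd hκδ (not_le_of_gt (lt_of_lt_of_le Ordinal.omega0_pos hωκ))
      exact EmbedAux.QposP_omega h0 (Or.inr hκδ)
  · refine ⟨EmbedAux.Qneg S, ?_, ?_, ?_, ?_⟩
    · intro δ a
      show (EmbedAux.QnegP S δ a).isSome ↔ 0 < δ
      unfold EmbedAux.QnegP
      by_cases h0 : δ = 0
      · rw [if_pos h0]
        simp [h0]
      · rw [if_neg h0]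
        by_cases h1 : δ = 1 <;>
          simp [h1, pos_iff_ne_zero, h0]
    · intro P' hdom' hext' δ a s hs
      exact absurd ⟨P', hdom', hext'⟩ hex
    · intro δ a hpos hnone
      show EmbedAux.QnegP S δ a = some none
      unfold EmbedAux.QnegP
      rw [if_neg hpos.ne']
      by_cases h1 : δ = 1
      · obtain ⟨i, hi, hin⟩ := hnone
        rw [if_pos h1]
        rw [h1] at hi
        rw [Ordinal.lt_one_iff_zero.mp hi] at hin
        rw [hin]
      · rw [if_neg h1]
    · intro δ a hκδ _
      show EmbedAux.QnegP S δ a = some none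
      have hωδ : Ordinal.omega0 ≤ δ := hωκ.trans hκδ
      have h0 : δ ≠ 0 := by
        intro h
        rw [h] at hωδ
        exact absurd hωδ (not_le_of_gt Ordinal.omega0_pos)
      have h1 : δ ≠ 1 := by
        intro h
        rw [h] at hωδ
        exact absurd hωδ (not_le_of_gt Ordinal.one_lt_omega0)
      unfold EmbedAux.QnegP
      rw [if_neg h0, if_neg h1]
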